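/- Let W : ℝ → ℝ be bounded with W' Lipschitz and bounded, α > 0, and define b_W(x,ρ) := ∫ W'(T_ρ(x) - T_ρ(x')) dρ(x') where T_ρ(x) = x + α·ρ((-∞,x)). Then there is a constant C (depending only on α, Lip(W'), ‖W'‖_∞) such that |b_W(x,ρ) - b_W(x,η)| ≤ C·d_TV(ρ,η) for all x ∈ ℝ and all probability measures ρ, η on ℝ. -/

import Mathlib

open MeasureTheory Set

/-- The map `T_ρ(x) = x + α ρ((-∞,x))`. -/
noncomputable def Tmap (α : ℝ) (ρ : Measure ℝ) (x : ℝ) : ℝ :=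
  x + α * (ρ (Iio x)).toReal

/-- Total variation distance between measures on ℝ:
`d_TV(ρ,η) = sup_B |ρ(B) - η(B)|`. -/
noncomputable def dTV (ρ η : Measure ℝ) : ℝ :=
  sSup {r : ℝ | ∃ B : Set ℝ, MeasurableSet B ∧ r = |(ρ B).toReal - (η B).toReal|}

/-- The interaction drift `b_W(x,ρ) = ∫ W'(T_ρ(x) - T_ρ(x')) dρ(x')`,
where `w` stands for `W'`. -/
noncomputable def bW (α : ℝ) (w : ℝ → ℝ) (x : ℝ) (ρ : Measure ℝ) : ℝ :=
  ∫ x', w (Tmap α ρ x - Tmap α ρ x') ∂ρ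

lemma dTV_bdd (ρ η : Measure ℝ) [IsProbabilityMeasure ρ] [IsProbabilityMeasure η] :
    BddAbove {r : ℝ | ∃ B : Set ℝ, MeasurableSet B ∧ r = |(ρ B).toReal - (η B).toReal|} := by
  refine ⟨1, ?_⟩
  rintro r ⟨B, hB, rfl⟩
  have h1 : (ρ B).toReal ≤ 1 := by
    simpa using ENNReal.toReal_mono (by simp) (prob_le_one (μ := ρ) (s := B))
  have h2 : (η B).toReal ≤ 1 := by
    simpa using ENNReal.toReal_mono (by simp) (prob_le_one (μ := η) (s := B))
  have h3 : 0 ≤ (ρ B).toReal := ENNReal.toReal_nonneg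
  have h4 : 0 ≤ (η B).toReal := ENNReal.toReal_nonneg
  rw [abs_sub_le_iff]
  constructor <;> linarith

lemma le_dTV {ρ η : Measure ℝ} [IsProbabilityMeasure ρ] [IsProbabilityMeasure η]
    {B : Set ℝ} (hB : MeasurableSet B) :
    |(ρ B).toReal - (η B).toReal| ≤ dTV ρ η :=
  le_csSup (dTV_bdd ρ η) ⟨B, hB, rfl⟩

lemma dTV_nonneg (ρ η : Measure ℝ) [IsProbabilityMeasure ρ] [IsProbabilityMeasure η] :
    0 ≤ dTV ρ η := by
  have := le_dTV (ρ := ρ) (η := η) (B := ∅) MeasurableSet.empty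
  simpa using this

lemma Tmap_monotone (α : ℝ) (hα : 0 ≤ α) (ρ : Measure ℝ) [IsFiniteMeasure ρ] :
    Monotone (Tmap α ρ) := by
  intro a b hab
  unfold Tmap
  have : (ρ (Iio a)).toReal ≤ (ρ (Iio b)).toReal :=
    ENNReal.toReal_mono (measure_ne_top _ _) (measure_mono (Iio_subset_Iio hab))
  nlinarith

lemma Tmap_measurable (α : ℝ) (hα : 0 ≤ α) (ρ : Measure ℝ) [IsFiniteMeasure ρ] :
    Measurable (Tmap α ρ) :=
  (Tmap_monotone α hα ρ).measurable

lemma abs_Tmap_sub (α : ℝ) (hα : 0 ≤ α) (ρ η : Measure ℝ)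
    [IsProbabilityMeasure ρ] [IsProbabilityMeasure η] (y : ℝ) :
    |Tmap α ρ y - Tmap α η y| ≤ α * dTV ρ η := by
  have h : Tmap α ρ y - Tmap α η y = α * ((ρ (Iio y)).toReal - (η (Iio y)).toReal) := by
    unfold Tmap; ring
  rw [h, abs_mul, abs_of_nonneg hα]
  exact mul_le_mul_of_nonneg_left (le_dTV measurableSet_Iio) hα

lemma integrable_of_bdd {μ : Measure ℝ} [IsFiniteMeasure μ] {f : ℝ → ℝ} {M : ℝ}
    (hf : Measurable f) (h : ∀ y, |f y| ≤ M) : Integrable f μ :=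
  ⟨hf.aestronglyMeasurable,
    HasFiniteIntegral.of_bounded (C := M) (ae_of_all _ (fun y => by simpa using h y))⟩

/-- Dual bound: bounded measurable test functions see only `2M·dTV`. -/
lemma integral_diff_le_dTV (ρ η : Measure ℝ) [IsProbabilityMeasure ρ] [IsProbabilityMeasure η]
    {f : ℝ → ℝ} {M : ℝ} (hf : Measurable f) (hfb : ∀ y, |f y| ≤ M) :
    |∫ y, f y ∂ρ - ∫ y, f y ∂η| ≤ 2 * M * dTV ρ η := by
  obtain ⟨S, hS, h1, h2⟩ := hahn_decomposition (μ := ρ) (ν := η)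
  have hle1 : η.restrict S ≤ ρ.restrict S := by
    refine Measure.le_iff.2 fun A hA => ?_
    rw [Measure.restrict_apply hA, Measure.restrict_apply hA]
    exact h1 _ (hA.inter hS) inter_subset_right
  have hle2 : ρ.restrict Sᶜ ≤ η.restrict Sᶜ := by
    refine Measure.le_iff.2 fun A hA => ?_
    rw [Measure.restrict_apply hA, Measure.restrict_apply hA]
    exact h2 _ (hA.inter hS.compl) inter_subset_right
  set μ₁ := ρ.restrict S - η.restrict S with hμ₁
  set μ₂ := η.restrict Sᶜ - ρ.restrict Sᶜ with hμ₂
  have hμ₁fin : IsFiniteMeasure μ₁ :=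
    isFiniteMeasure_of_le (ρ.restrict S) Measure.sub_le
  have hμ₂fin : IsFiniteMeasure μ₂ :=
    isFiniteMeasure_of_le (η.restrict Sᶜ) Measure.sub_le
  have hadd1 : μ₁ + η.restrict S = ρ.restrict S := Measure.sub_add_cancel_of_le hle1
  have hadd2 : μ₂ + ρ.restrict Sᶜ = η.restrict Sᶜ := Measure.sub_add_cancel_of_le hle2
  have hint : ∀ (ν : Measure ℝ), IsFiniteMeasure ν → Integrable f ν := by
    intro ν hν
    exact integrable_of_bdd hf hfb
  have hiρS : Integrable f (ρ.restrict S) := hint _ (by infer_instance)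
  have hiηS : Integrable f (η.restrict S) := hint _ (by infer_instance)
  have hiρSc : Integrable f (ρ.restrict Sᶜ) := hint _ (by infer_instance)
  have hiηSc : Integrable f (η.restrict Sᶜ) := hint _ (by infer_instance)
  have hiμ₁ : Integrable f μ₁ := hint _ hμ₁fin
  have hiμ₂ : Integrable f μ₂ := hint _ hμ₂fin
  have e1 : ∫ y, f y ∂(ρ.restrict S) = ∫ y, f y ∂μ₁ + ∫ y, f y ∂(η.restrict S) := by
    rw [← hadd1, integral_add_measure hiμ₁ hiηS]
  have e2 : ∫ y, f y ∂(η.restrict Sᶜ) = ∫ y, f y ∂μ₂ + ∫ y, f y ∂(ρ.restrict Sᶜ) := by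
    rw [← hadd2, integral_add_measure hiμ₂ hiρSc]
  have splitρ : ∫ y, f y ∂ρ = ∫ y, f y ∂(ρ.restrict S) + ∫ y, f y ∂(ρ.restrict Sᶜ) :=
    (integral_add_compl hS (hint ρ (by infer_instance))).symm
  have splitη : ∫ y, f y ∂η = ∫ y, f y ∂(η.restrict S) + ∫ y, f y ∂(η.restrict Sᶜ) :=
    (integral_add_compl hS (hint η (by infer_instance))).symm
  have key : ∫ y, f y ∂ρ - ∫ y, f y ∂η = ∫ y, f y ∂μ₁ - ∫ y, f y ∂μ₂ := by
    rw [splitρ, splitη, e1, e2]; ring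
  have hμ₁univ : (μ₁ univ).toReal = (ρ S).toReal - (η S).toReal := by
    rw [hμ₁, Measure.sub_apply MeasurableSet.univ hle1]
    rw [Measure.restrict_apply_univ, Measure.restrict_apply_univ]
    exact ENNReal.toReal_sub_of_le (h1 S hS subset_rfl) (measure_ne_top _ _)
  have hμ₂univ : (μ₂ univ).toReal = (η Sᶜ).toReal - (ρ Sᶜ).toReal := by
    rw [hμ₂, Measure.sub_apply MeasurableSet.univ hle2]
    rw [Measure.restrict_apply_univ, Measure.restrict_apply_univ]
    exact ENNReal.toReal_sub_of_le (h2 Sᶜ hS.compl subset_rfl) (measure_ne_top _ _)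
  have b1 : |∫ y, f y ∂μ₁| ≤ M * dTV ρ η := by
    have hM : 0 ≤ M := le_trans (abs_nonneg _) (hfb 0)
    have := norm_integral_le_of_norm_le_const (μ := μ₁) (f := f) (C := M)
      (ae_of_all _ fun y => by simpa using hfb y)
    rw [Real.norm_eq_abs] at this
    refine this.trans ?_
    rw [show μ₁.real univ = _ from hμ₁univ]
    refine mul_le_mul_of_nonneg_left ?_ hM
    exact (le_abs_self _).trans (le_dTV hS)
  have b2 : |∫ y, f y ∂μ₂| ≤ M * dTV ρ η := by
    have hM : 0 ≤ M := le_trans (abs_nonneg _) (hfb 0)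
    have := norm_integral_le_of_norm_le_const (μ := μ₂) (f := f) (C := M)
      (ae_of_all _ fun y => by simpa using hfb y)
    rw [Real.norm_eq_abs] at this
    refine this.trans ?_
    rw [show μ₂.real univ = _ from hμ₂univ]
    refine mul_le_mul_of_nonneg_left ?_ hM
    have : |(ρ Sᶜ).toReal - (η Sᶜ).toReal| ≤ dTV ρ η := le_dTV hS.compl
    rw [abs_sub_comm] at this
    exact (le_abs_self _).trans this
  calc |∫ y, f y ∂ρ - ∫ y, f y ∂η| = |∫ y, f y ∂μ₁ - ∫ y, f y ∂μ₂| := by rw [key]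
    _ ≤ |∫ y, f y ∂μ₁| + |∫ y, f y ∂μ₂| := abs_sub _ _
    _ ≤ M * dTV ρ η + M * dTV ρ η := add_le_add b1 b2
    _ = 2 * M * dTV ρ η := by ring

/-- If `w = W'` is bounded by `M` and Lipschitz with constant `K`,
then there is a constant `C` (depending only on α, K, M) such that
`|b_W(x,ρ) - b_W(x,η)| ≤ C d_TV(ρ,η)` for all x and all probability measures ρ, η. -/
theorem bW_TV_Lipschitz (α K M : ℝ) (hα : 0 < α) (hK : 0 ≤ K) (hM : 0 ≤ M)
    (w : ℝ → ℝ) (hwb : ∀ x, |w x| ≤ M) (hwL : ∀ x y, |w x - w y| ≤ K * |x - y|) :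
    ∃ C : ℝ, ∀ (x : ℝ) (ρ η : Measure ℝ),
      IsProbabilityMeasure ρ → IsProbabilityMeasure η →
      |bW α w x ρ - bW α w x η| ≤ C * dTV ρ η := by
  have hw_cont : Continuous w := by
    have : LipschitzWith (Real.toNNReal K) w := by
      refine LipschitzWith.of_dist_le_mul fun a b => ?_
      rw [Real.dist_eq, Real.dist_eq, Real.coe_toNNReal K hK]
      exact hwL a b
    exact this.continuous
  refine ⟨2 * K * α + 2 * M, fun x ρ η hρ hη => ?_⟩
  haveI := hρ; haveI := hη
  set f : ℝ → ℝ := fun x' => w (Tmap α η x - Tmap α η x') with hf_def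
  set g : ℝ → ℝ := fun x' => w (Tmap α ρ x - Tmap α ρ x') with hg_def
  have hf_meas : Measurable f :=
    hw_cont.measurable.comp (measurable_const.sub (Tmap_measurable α hα.le η))
  have hg_meas : Measurable g :=
    hw_cont.measurable.comp (measurable_const.sub (Tmap_measurable α hα.le ρ))
  have hf_bdd : ∀ y, |f y| ≤ M := fun y => hwb _
  have hg_bdd : ∀ y, |g y| ≤ M := fun y => hwb _
  have hif : Integrable f ρ := integrable_of_bdd hf_meas hf_bdd
  have hig : Integrable g ρ := integrable_of_bdd hg_meas hg_bdd
  have hdtv := dTV_nonneg ρ η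
  -- pointwise bound for the first term
  have hpt : ∀ y, |g y - f y| ≤ 2 * K * α * dTV ρ η := by
    intro y
    have h1 : |g y - f y| ≤ K * |(Tmap α ρ x - Tmap α ρ y) - (Tmap α η x - Tmap α η y)| :=
      hwL _ _
    have h2 : |(Tmap α ρ x - Tmap α ρ y) - (Tmap α η x - Tmap α η y)|
        ≤ |Tmap α ρ x - Tmap α η x| + |Tmap α ρ y - Tmap α η y| := by
      have : (Tmap α ρ x - Tmap α ρ y) - (Tmap α η x - Tmap α η y)
          = (Tmap α ρ x - Tmap α η x) - (Tmap α ρ y - Tmap α η y) := by ring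
      rw [this]
      exact abs_sub _ _
    have h3 := abs_Tmap_sub α hα.le ρ η x
    have h4 := abs_Tmap_sub α hα.le ρ η y
    calc |g y - f y| ≤ K * |(Tmap α ρ x - Tmap α ρ y) - (Tmap α η x - Tmap α η y)| := h1
      _ ≤ K * (α * dTV ρ η + α * dTV ρ η) :=
          mul_le_mul_of_nonneg_left (h2.trans (add_le_add h3 h4)) hK
      _ = 2 * K * α * dTV ρ η := by ring
  have term1 : |∫ y, g y ∂ρ - ∫ y, f y ∂ρ| ≤ 2 * K * α * dTV ρ η := by
    rw [← integral_sub hig hif]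
    have := norm_integral_le_of_norm_le_const (μ := ρ) (f := fun y => g y - f y)
      (C := 2 * K * α * dTV ρ η) (ae_of_all _ fun y => by simpa using hpt y)
    rw [Real.norm_eq_abs] at this
    simpa using this
  have term2 : |∫ y, f y ∂ρ - ∫ y, f y ∂η| ≤ 2 * M * dTV ρ η :=
    integral_diff_le_dTV ρ η hf_meas hf_bdd
  have hbWρ : bW α w x ρ = ∫ y, g y ∂ρ := rfl
  have hbWη : bW α w x η = ∫ y, f y ∂η := rfl
  calc |bW α w x ρ - bW α w x η|
      = |(∫ y, g y ∂ρ - ∫ y, f y ∂ρ) + (∫ y, f y ∂ρ - ∫ y, f y ∂η)| := by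
        rw [hbWρ, hbWη]; ring_nf
    _ ≤ |∫ y, g y ∂ρ - ∫ y, f y ∂ρ| + |∫ y, f y ∂ρ - ∫ y, f y ∂η| := abs_add_le _ _
    _ ≤ 2 * K * α * dTV ρ η + 2 * M * dTV ρ η := add_le_add term1 term2
    _ = (2 * K * α + 2 * M) * dTV ρ η := by ring
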